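/- (Generalized Bayer–Stillman criterion.) Let (f_α)_{α∈Ω} be a family of nonzero elements of S indexed by a well-ordered set Ω. If the family of leading monomials (lm(f_α))_{α∈Ω} is a regular sequence on S, then (f_α)_{α∈Ω} is a regular sequence on S and the set {f_α : α ∈ Ω} is a Gröbner base for the ideal it generates. -/

import Mathlib

set_option maxHeartbeats 1000000


open MvPolynomial

noncomputable section

/-- `r` is a monomial order on the monomials (finitely supported exponent vectors):
a well-order compatible with multiplication.  Here `r a b` means `x^a < x^b`. -/
def IsMonomialOrder {σ : Type*} (r : (σ →₀ ℕ) → (σ →₀ ℕ) → Prop) : Prop :=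
  IsWellOrder (σ →₀ ℕ) r ∧ ∀ a b c : σ →₀ ℕ, r a b → r (c + a) (c + b)

/-- `m` is the leading monomial of the polynomial `f` with respect to the order `r`. -/
def IsLM {σ k : Type*} [CommSemiring k] (r : (σ →₀ ℕ) → (σ →₀ ℕ) → Prop)
    (f : MvPolynomial σ k) (m : σ →₀ ℕ) : Prop :=
  m ∈ f.support ∧ ∀ m' ∈ f.support, m' ≠ m → r m' m

/-- `t` is the leading term of `f` with respect to `r`. -/
def IsLT {σ k : Type*} [CommSemiring k] (r : (σ →₀ ℕ) → (σ →₀ ℕ) → Prop)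
    (f t : MvPolynomial σ k) : Prop :=
  ∃ m, IsLM r f m ∧ t = monomial m (f.coeff m)

/-- The initial ideal of `I`: the ideal generated by the leading terms of nonzero elements. -/
def initialIdeal {σ k : Type*} [CommSemiring k] (r : (σ →₀ ℕ) → (σ →₀ ℕ) → Prop)
    (I : Ideal (MvPolynomial σ k)) : Ideal (MvPolynomial σ k) :=
  Ideal.span {t | ∃ f ∈ I, f ≠ 0 ∧ IsLT r f t}

/-- The set of leading monomials (as polynomials) of the nonzero members of `G`: `in(G)`. -/
def lmMonomials {σ k : Type*} [CommSemiring k] (r : (σ →₀ ℕ) → (σ →₀ ℕ) → Prop)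
    (G : Set (MvPolynomial σ k)) : Set (MvPolynomial σ k) :=
  {t | ∃ m, (∃ g ∈ G, g ≠ 0 ∧ IsLM r g m) ∧ t = monomial m 1}

/-- `G ⊆ I` is a Gröbner base for `I`: the leading monomials of members of `G`
generate the initial ideal of `I`. -/
def IsGroebnerBasis {σ k : Type*} [CommSemiring k] (r : (σ →₀ ℕ) → (σ →₀ ℕ) → Prop)
    (G : Set (MvPolynomial σ k)) (I : Ideal (MvPolynomial σ k)) : Prop :=
  G ⊆ ↑I ∧ Ideal.span (lmMonomials r G) = initialIdeal r I

/-- `S⟨n⟩ = k[x₀, …, xₙ₋₁]`, the subalgebra of polynomials in the first `n` variables. -/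
def Sn (k : Type*) [CommSemiring k] (n : ℕ) : Subalgebra k (MvPolynomial ℕ k) :=
  MvPolynomial.supported k {i | i < n}

/-- The initial ideal of an ideal `J` of `S⟨n⟩`, computed inside `S⟨n⟩`
(with the restricted monomial order). -/
def initialIdealIn {k : Type*} [CommSemiring k] (r : (ℕ →₀ ℕ) → (ℕ →₀ ℕ) → Prop)
    (n : ℕ) (J : Ideal ↥(Sn k n)) : Ideal ↥(Sn k n) :=
  Ideal.span {t | ∃ f ∈ J, f ≠ 0 ∧ IsLT r (f : MvPolynomial ℕ k) (t : MvPolynomial ℕ k)}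

/-- The ideal `I ∩ S⟨n⟩` of `S⟨n⟩`. -/
def interIdeal {k : Type*} [CommSemiring k] (I : Ideal (MvPolynomial ℕ k)) (n : ℕ) :
    Ideal ↥(Sn k n) :=
  Ideal.comap (Sn k n).subtype I

/-- A subset `G` of `S` lying in `S⟨n⟩` is a Gröbner base for the ideal `J` of `S⟨n⟩`. -/
def IsGroebnerBasisIn {k : Type*} [CommSemiring k] (r : (ℕ →₀ ℕ) → (ℕ →₀ ℕ) → Prop)
    (n : ℕ) (G : Set (MvPolynomial ℕ k)) (J : Ideal ↥(Sn k n)) : Prop :=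
  (∀ g ∈ G, ∃ hg : g ∈ Sn k n, (⟨g, hg⟩ : ↥(Sn k n)) ∈ J) ∧
  Ideal.span {t : ↥(Sn k n) | ∃ m, (∃ g ∈ G, g ≠ 0 ∧ IsLM r g m) ∧
      (t : MvPolynomial ℕ k) = monomial m 1} = initialIdealIn r n J

/-- `f'` is a remainder of `f` on division by `G` with respect to the order `r`. -/
def IsRemainder {σ k : Type*} [CommSemiring k] (r : (σ →₀ ℕ) → (σ →₀ ℕ) → Prop)
    (G : Set (MvPolynomial σ k)) (f f' : MvPolynomial σ k) : Prop :=
  (∃ (s : ℕ) (g q : Fin s → MvPolynomial σ k),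
    (∀ i, g i ∈ G) ∧
    f = (∑ i, q i * g i) + f' ∧
    ∀ i, q i * g i ≠ 0 → ∀ m m', IsLM r (q i * g i) m → IsLM r f m' → m = m' ∨ r m m') ∧
  ∀ m ∈ f'.support, (monomial m 1 : MvPolynomial σ k) ∉ Ideal.span (lmMonomials r G)

/-- `G` is a reduced Gröbner base for `I`: every member is monic and no leading monomial
of a member divides any term of another member. -/
def IsReducedGB {σ k : Type*} [CommSemiring k] (r : (σ →₀ ℕ) → (σ →₀ ℕ) → Prop)
    (G : Set (MvPolynomial σ k)) (I : Ideal (MvPolynomial σ k)) : Prop :=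
  IsGroebnerBasis r G I ∧
  (∀ g ∈ G, ∃ m, IsLM r g m ∧ MvPolynomial.coeff m g = 1) ∧
  (∀ g ∈ G, ∀ h ∈ G, g ≠ h → ∀ m, IsLM r g m → ∀ m' ∈ h.support, ¬ m ≤ m')

/-- A regular sequence indexed by an ordered set `(Ω, lt)`. -/
def IsRegularSeq {R : Type*} [CommRing R] {Ω : Type*} (lt : Ω → Ω → Prop) (f : Ω → R) : Prop :=
  Ideal.span (Set.range f) ≠ ⊤ ∧
  ∀ α : Ω, ∀ h : R, h * f α ∈ Ideal.span (f '' {β | lt β α}) →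
    h ∈ Ideal.span (f '' {β | lt β α})

/-- The FR-condition: every finite strictly increasing subfamily is a regular sequence
in this order. -/
def SatisfiesFR {R : Type*} [CommRing R] {Ω : Type*} (lt : Ω → Ω → Prop) (f : Ω → R) : Prop :=
  ∀ (n : ℕ) (α : Fin n → Ω), (∀ i j : Fin n, i < j → lt (α i) (α j)) →
    IsRegularSeq (· < ·) (fun i => f (α i))

namespace BSAux

variable {k : Type*} [Field k]
variable {r : (ℕ →₀ ℕ) → (ℕ →₀ ℕ) → Prop}

section OrderLemmas

variable (hr : IsMonomialOrder r)
include hr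

lemma rtrans {a b c} (h1 : r a b) (h2 : r b c) : r a c :=
  (haveI := hr.1; _root_.trans_of r h1 h2)

lemma rirrefl (a) : ¬ r a a := by
  haveI := hr.1; exact irrefl_of r a

lemma rasymm {a b} (h : r a b) : ¬ r b a := fun h' => rirrefl hr a (rtrans hr h h')

lemma rtotal {a b} (h : a ≠ b) : r a b ∨ r b a := by
  haveI := hr.1
  rcases trichotomous_of r a b with h1 | h1 | h1
  · exact Or.inl h1
  · exact absurd h1 h
  · exact Or.inr h1

lemma rwf : WellFounded r := by haveI := hr.1; exact IsWellFounded.wf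

lemma radd_right {a b : ℕ →₀ ℕ} (c) (h : r a b) : r (a + c) (b + c) := by
  rw [add_comm a c, add_comm b c]; exact hr.2 a b c h

lemma radd_left {a b : ℕ →₀ ℕ} (c) (h : r a b) : r (c + a) (c + b) := hr.2 a b c h

lemma radd_of_le_lt {a' a b' b : ℕ →₀ ℕ} (h1 : a' = a ∨ r a' a) (h2 : r b' b) :
    r (a' + b') (a + b) := by
  rcases h1 with rfl | h1
  · exact radd_left hr _ h2
  · exact rtrans hr (radd_right hr b' h1) (radd_left hr a h2)

lemma radd_of_lt_le {a' a b' b : ℕ →₀ ℕ} (h1 : r a' a) (h2 : b' = b ∨ r b' b) :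
    r (a' + b') (a + b) := by
  rcases h2 with rfl | h2
  · exact radd_right hr _ h1
  · exact rtrans hr (radd_left hr a' h2) (radd_right hr b h1)

lemma radd_le_le {a' a b' b : ℕ →₀ ℕ} (h1 : a' = a ∨ r a' a) (h2 : b' = b ∨ r b' b) :
    a' + b' = a + b ∨ r (a' + b') (a + b) := by
  rcases h2 with rfl | h2
  · rcases h1 with rfl | h1
    · exact Or.inl rfl
    · exact Or.inr (radd_right hr b' h1)
  · exact Or.inr (radd_of_le_lt hr h1 h2)

lemma exists_rmax (s : Finset (ℕ →₀ ℕ)) : s.Nonempty → ∃ M ∈ s, ∀ a ∈ s, a ≠ M → r a M := by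
  classical
  induction s using Finset.induction_on with
  | empty => intro h; exact absurd h (by simp)
  | @insert a s' ha IH =>
    intro _
    rcases s'.eq_empty_or_nonempty with rfl | hs'
    · refine ⟨a, Finset.mem_insert_self a ∅, ?_⟩
      intro x hx hxa
      rcases Finset.mem_insert.mp hx with rfl | hx'
      · exact absurd rfl hxa
      · exact absurd hx' (Finset.notMem_empty x)
    · obtain ⟨M, hM, hmax⟩ := IH hs'
      have hane : a ≠ M := fun h => ha (h ▸ hM)
      rcases rtotal hr hane with h1 | h1
      · refine ⟨M, Finset.mem_insert_of_mem hM, ?_⟩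
        intro x hx hxM
        rcases Finset.mem_insert.mp hx with rfl | hx'
        · exact h1
        · exact hmax x hx' hxM
      · refine ⟨a, Finset.mem_insert_self a s', ?_⟩
        intro x hx hxa
        rcases Finset.mem_insert.mp hx with rfl | hx'
        · exact absurd rfl hxa
        · by_cases hxM : x = M
          · exact hxM ▸ h1
          · exact rtrans hr (hmax x hx' hxM) h1

lemma isLM_unique {f : MvPolynomial ℕ k} {m₁ m₂} (h1 : IsLM r f m₁) (h2 : IsLM r f m₂) :
    m₁ = m₂ := by
  by_contra hne
  exact rasymm hr (h2.2 m₁ h1.1 hne) (h1.2 m₂ h2.1 (Ne.symm hne))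

lemma exists_isLM {f : MvPolynomial ℕ k} (hf : f ≠ 0) : ∃ a, IsLM r f a := by
  obtain ⟨M, hM, hmax⟩ := exists_rmax hr f.support
    (Finset.nonempty_iff_ne_empty.mpr (fun h => hf (support_eq_empty.mp h)))
  exact ⟨M, hM, hmax⟩

omit hr in
lemma isLM_coeff_ne_zero {f : MvPolynomial ℕ k} {a} (h : IsLM r f a) : coeff a f ≠ 0 :=
  mem_support_iff.mp h.1

omit hr in
lemma isLM_ne_zero {f : MvPolynomial ℕ k} {a} (h : IsLM r f a) : f ≠ 0 := by
  intro h0; exact isLM_coeff_ne_zero h (by rw [h0]; simp)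

omit hr in
lemma isLM_monomial {a : ℕ →₀ ℕ} {c : k} (hc : c ≠ 0) : IsLM r (monomial a c) a := by
  constructor
  · rw [mem_support_iff, coeff_monomial, if_pos rfl]; exact hc
  · intro m' hm' hne
    rw [mem_support_iff, coeff_monomial] at hm'
    rcases eq_or_ne a m' with rfl | h
    · exact absurd rfl hne
    · rw [if_neg h] at hm'; exact absurd rfl hm'

lemma coeff_mul_lm {f g : MvPolynomial ℕ k} {a b} (hf : IsLM r f a) (hg : IsLM r g b) :
    coeff (a + b) (f * g) = coeff a f * coeff b g := by
  classical
  have hmem : (a, b) ∈ Finset.HasAntidiagonal.antidiagonal (a + b) := Finset.HasAntidiagonal.mem_antidiagonal.mpr rfl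
  have h0 : ∀ p ∈ Finset.HasAntidiagonal.antidiagonal (a + b), p ≠ (a, b) →
      coeff p.1 f * coeff p.2 g = 0 := by
    intro p hp hne
    by_cases h1 : coeff p.1 f = 0
    · rw [h1, zero_mul]
    by_cases h2 : coeff p.2 g = 0
    · rw [h2, mul_zero]
    exfalso
    have hsum : p.1 + p.2 = a + b := Finset.HasAntidiagonal.mem_antidiagonal.mp hp
    have hp1 : p.1 = a ∨ r p.1 a := by
      rcases eq_or_ne p.1 a with h | h
      · exact Or.inl h
      · exact Or.inr (hf.2 _ (mem_support_iff.mpr h1) h)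
    have hp2 : p.2 = b ∨ r p.2 b := by
      rcases eq_or_ne p.2 b with h | h
      · exact Or.inl h
      · exact Or.inr (hg.2 _ (mem_support_iff.mpr h2) h)
    rcases hp1 with e1 | h1'
    · rcases hp2 with e2 | h2'
      · exact hne (Prod.ext e1 e2)
      · have h3 := radd_of_le_lt hr (Or.inl e1) h2'
        rw [hsum] at h3
        exact rirrefl hr (a + b) h3
    · have h3 := radd_of_lt_le hr h1' hp2
      rw [hsum] at h3
      exact rirrefl hr (a + b) h3
  rw [coeff_mul, Finset.sum_eq_single_of_mem (a, b) hmem h0]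

lemma support_mul_le {f g : MvPolynomial ℕ k} {a b} (hf : IsLM r f a) (hg : IsLM r g b) :
    ∀ x ∈ (f * g).support, x = a + b ∨ r x (a + b) := by
  classical
  intro x hx
  obtain ⟨c, hc, d, hd, rfl⟩ := Finset.mem_add.mp (support_mul f g hx)
  have h1 : c = a ∨ r c a := by
    rcases eq_or_ne c a with h | h
    · exact Or.inl h
    · exact Or.inr (hf.2 _ hc h)
  have h2 : d = b ∨ r d b := by
    rcases eq_or_ne d b with h | h
    · exact Or.inl h
    · exact Or.inr (hg.2 _ hd h)
  exact radd_le_le hr h1 h2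

lemma isLM_mul {f g : MvPolynomial ℕ k} {a b} (hf : IsLM r f a) (hg : IsLM r g b) :
    IsLM r (f * g) (a + b) :=
  ⟨mem_support_iff.mpr (by
      rw [coeff_mul_lm hr hf hg]
      exact mul_ne_zero (isLM_coeff_ne_zero hf) (isLM_coeff_ne_zero hg)),
   fun x hx hne => (support_mul_le hr hf hg x hx).resolve_left hne⟩

end OrderLemmas


section Claims

variable {Ω : Type*} {lt : Ω → Ω → Prop} {m : Ω → (ℕ →₀ ℕ)}

lemma mem_span_mon {A : Set Ω} {x : MvPolynomial ℕ k} :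
    x ∈ Ideal.span ((fun α => (monomial (m α) (1 : k) : MvPolynomial ℕ k)) '' A) ↔
      ∀ xi ∈ x.support, ∃ α ∈ A, m α ≤ xi := by
  have himg : (fun s => (monomial s (1 : k) : MvPolynomial ℕ k)) '' (m '' A) =
      (fun α => (monomial (m α) (1 : k) : MvPolynomial ℕ k)) '' A := Set.image_image _ _ _
  rw [← himg, mem_ideal_span_monomial_image]
  constructor
  · intro h xi hxi
    obtain ⟨si, hsi, hle⟩ := h xi hxi
    obtain ⟨α, hα, rfl⟩ := hsi
    exact ⟨α, hα, hle⟩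
  · intro h xi hxi
    obtain ⟨α, hα, hle⟩ := h xi hxi
    exact ⟨m α, ⟨α, hα, rfl⟩, hle⟩

variable (hr : IsMonomialOrder r) (hwo : IsWellOrder Ω lt)
variable (hreg : IsRegularSeq lt (fun α => (monomial (m α) 1 : MvPolynomial ℕ k)))

section RegClaims
include hr hwo hreg

lemma claim0 : ∀ α, m α ≠ 0 := by
  intro α h
  apply hreg.1
  rw [Ideal.eq_top_iff_one]
  apply Ideal.subset_span
  exact ⟨α, by simp only [h, monomial_zero', C_1]⟩

lemma claimA : ∀ δ ε, δ ≠ ε → ¬ m δ ≤ m ε := by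
  classical
  have h0 := claim0 hr hwo hreg
  haveI := hwo
  intro δ
  refine (IsWellFounded.wf (r := lt)).induction
    (C := fun δ => ∀ ε, δ ≠ ε → ¬ m δ ≤ m ε) δ ?_
  intro δ IH ε hne hle
  rcases trichotomous_of lt δ ε with hlt | heq | hlt
  · apply hreg.1
    rw [Ideal.eq_top_iff_one]
    have h1 : (1 : MvPolynomial ℕ k) * monomial (m ε) 1 ∈
        Ideal.span ((fun α => (monomial (m α) 1 : MvPolynomial ℕ k)) '' {β | lt β ε}) := by
      rw [one_mul, mem_span_mon]
      intro xi hxi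
      rw [support_monomial, if_neg one_ne_zero, Finset.mem_singleton] at hxi
      subst hxi
      exact ⟨δ, hlt, hle⟩
    have h2 := hreg.2 ε 1 h1
    exact Ideal.span_mono (Set.image_subset_range _ _) h2
  · exact hne heq
  · have hmem : monomial (m ε - m δ) (1 : k) * monomial (m δ) 1 ∈
        Ideal.span ((fun α => (monomial (m α) 1 : MvPolynomial ℕ k)) '' {β | lt β δ}) := by
      rw [monomial_mul, mem_span_mon]
      intro xi hxi
      rw [support_monomial, if_neg (by norm_num : (1 : k) * 1 ≠ 0),
        Finset.mem_singleton] at hxi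
      subst hxi
      exact ⟨ε, hlt, le_tsub_add⟩
    have h2 := hreg.2 δ _ hmem
    rw [mem_span_mon] at h2
    obtain ⟨γ, hγδ, hγle⟩ := h2 (m ε - m δ)
      (by rw [support_monomial, if_neg one_ne_zero]; exact Finset.mem_singleton_self _)
    have hγε : γ ≠ ε := by
      rintro rfl
      obtain ⟨i, hi⟩ : ∃ i, m δ i ≠ 0 := by
        by_contra hno
        push_neg at hno
        exact h0 δ (Finsupp.ext hno)
      have h3 := Finsupp.le_def.mp hγle i
      rw [Finsupp.tsub_apply] at h3
      have h4 := Finsupp.le_def.mp hle i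
      omega
    exact IH γ hγδ ε hγε (hγle.trans tsub_le_self)

lemma claimB : ∀ δ ε, δ ≠ ε → ∀ i, m δ i = 0 ∨ m ε i = 0 := by
  classical
  haveI := hwo
  have hcore : ∀ δ ε, lt ε δ → ∀ i, m δ i ≠ 0 → m ε i ≠ 0 → False := by
    intro δ ε hlt i hδi hεi
    have hmem : monomial (m ε - m δ) (1 : k) * monomial (m δ) 1 ∈
        Ideal.span ((fun α => (monomial (m α) 1 : MvPolynomial ℕ k)) '' {β | lt β δ}) := by
      rw [monomial_mul, mem_span_mon]
      intro xi hxi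
      rw [support_monomial, if_neg (by norm_num : (1 : k) * 1 ≠ 0),
        Finset.mem_singleton] at hxi
      subst hxi
      exact ⟨ε, hlt, le_tsub_add⟩
    have h2 := hreg.2 δ _ hmem
    rw [mem_span_mon] at h2
    obtain ⟨γ, hγδ, hγle⟩ := h2 (m ε - m δ)
      (by rw [support_monomial, if_neg one_ne_zero]; exact Finset.mem_singleton_self _)
    rcases eq_or_ne γ ε with rfl | hγε
    · have h3 := Finsupp.le_def.mp hγle i
      rw [Finsupp.tsub_apply] at h3
      omega
    · exact claimA hr hwo hreg γ ε hγε (hγle.trans tsub_le_self)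
  intro δ ε hne i
  by_contra hno
  push_neg at hno
  rcases trichotomous_of lt δ ε with hlt | heq | hlt
  · exact hcore ε δ hlt i hno.2 hno.1
  · exact hne heq
  · exact hcore δ ε hlt i hno.1 hno.2

lemma coprime_add_le {α β : Ω} {M : ℕ →₀ ℕ} (hne : α ≠ β) (h1 : m α ≤ M) (h2 : m β ≤ M) :
    m α + m β ≤ M := by
  rw [Finsupp.le_def]
  intro i
  rw [Finsupp.add_apply]
  rcases claimB hr hwo hreg α β hne i with h | h
  · rw [h, zero_add]; exact Finsupp.le_def.mp h2 i
  · rw [h, add_zero]; exact Finsupp.le_def.mp h1 i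

lemma coprime_cancel {α β : Ω} {c : ℕ →₀ ℕ} (hne : β ≠ α) (h : m β ≤ c + m α) : m β ≤ c := by
  rw [Finsupp.le_def]
  intro i
  rcases claimB hr hwo hreg β α hne i with hb | ha
  · rw [hb]; exact Nat.zero_le _
  · have h5 := Finsupp.le_def.mp h i
    rw [Finsupp.add_apply, ha, add_zero] at h5
    exact h5

end RegClaims

end Claims


section Key

variable {Ω : Type*} {lt : Ω → Ω → Prop} {m : Ω → (ℕ →₀ ℕ)} {f : Ω → MvPolynomial ℕ k}

lemma support_sum_subset {ι : Type*} (s : Finset ι) (p : ι → MvPolynomial ℕ k) :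
    (∑ α ∈ s, p α).support ⊆ s.biUnion (fun α => (p α).support) := by
  classical
  intro a ha
  rw [mem_support_iff] at ha
  by_contra hno
  apply ha
  rw [coeff_sum]
  refine Finset.sum_eq_zero (fun α hα => ?_)
  have h1 : a ∉ (p α).support := fun h => hno (Finset.mem_biUnion.mpr ⟨α, hα, h⟩)
  exact notMem_support_iff.mp h1

variable (hr : IsMonomialOrder r) (hwo : IsWellOrder Ω lt)
variable (hreg : IsRegularSeq lt (fun α => (monomial (m α) 1 : MvPolynomial ℕ k)))
variable (hm : ∀ α, IsLM r (f α) (m α))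

include hr hwo hreg hm

lemma key :
    ∀ M : ℕ →₀ ℕ, ∀ (A : Set Ω) (g : MvPolynomial ℕ k) (s : Finset Ω)
      (q : Ω → MvPolynomial ℕ k),
      ↑s ⊆ A → g = ∑ α ∈ s, q α * f α →
      (∀ α ∈ s, ∀ a ∈ (q α * f α).support, a = M ∨ r a M) →
      ∀ Mg, IsLM r g Mg → ∃ α ∈ A, m α ≤ Mg := by
  classical
  intro M
  refine (rwf hr).induction
    (C := fun M => ∀ (A : Set Ω) (g : MvPolynomial ℕ k) (s : Finset Ω)
      (q : Ω → MvPolynomial ℕ k),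
      ↑s ⊆ A → g = ∑ α ∈ s, q α * f α →
      (∀ α ∈ s, ∀ a ∈ (q α * f α).support, a = M ∨ r a M) →
      ∀ Mg, IsLM r g Mg → ∃ α ∈ A, m α ≤ Mg) M ?_
  clear M
  intro M IH A g s q hsA hrep hbound Mg hMg
  have hgs : g.support ⊆ s.biUnion fun α => (q α * f α).support := by
    rw [hrep]; exact support_sum_subset s _
  by_cases hMmem : M ∈ g.support
  · -- direct case : Mg = M and some product realizes it
    have hMgM : Mg = M := by
      rcases eq_or_ne Mg M with h | h
      · exact h
      · exfalso
        have h1 : r M Mg := hMg.2 M hMmem (fun e => h e.symm)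
        obtain ⟨α, hα, hMα⟩ := Finset.mem_biUnion.mp (hgs hMg.1)
        rcases hbound α hα Mg hMα with h2 | h2
        · exact h h2
        · exact rasymm hr h1 h2
    obtain ⟨α, hαs, hMα⟩ := Finset.mem_biUnion.mp (hgs hMmem)
    refine ⟨α, hsA hαs, ?_⟩
    have hlmprod : IsLM r (q α * f α) M :=
      ⟨hMα, fun x hx hne => (hbound α hαs x hx).resolve_left hne⟩
    have hq_ne : q α ≠ 0 := by
      rintro h
      rw [h, zero_mul] at hlmprod
      simpa using hlmprod.1
    obtain ⟨a, ha⟩ := exists_isLM hr hq_ne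
    have heq : a + m α = M := isLM_unique hr (isLM_mul hr ha (hm α)) hlmprod
    rw [hMgM, ← heq]
    exact le_add_self
  · -- cancellation case
    have hcM : coeff M g = 0 := notMem_support_iff.mp hMmem
    suffices hstep : ∃ q' : Ω → MvPolynomial ℕ k,
        g = ∑ α ∈ s, q' α * f α ∧ ∀ α ∈ s, ∀ a ∈ (q' α * f α).support, r a M by
      obtain ⟨q', hrep', hbound'⟩ := hstep
      have hgs' : g.support ⊆ s.biUnion fun α => (q' α * f α).support := by
        rw [hrep']; exact support_sum_subset s _
      obtain ⟨M'', hM''u, hmax⟩ :=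
        exists_rmax hr (s.biUnion fun α => (q' α * f α).support) ⟨Mg, hgs' hMg.1⟩
      obtain ⟨α1, hα1, hsupp1⟩ := Finset.mem_biUnion.mp hM''u
      have hM''M : r M'' M := hbound' α1 hα1 _ hsupp1
      refine IH M'' hM''M A g s q' hsA hrep' (fun α hα a ha => ?_) Mg hMg
      rcases eq_or_ne a M'' with h | h
      · exact Or.inl h
      · exact Or.inr (hmax a (Finset.mem_biUnion.mpr ⟨α, hα, ha⟩) h)
    set T : Finset Ω := s.filter (fun α => M ∈ (q α * f α).support) with hT
    rcases T.eq_empty_or_nonempty with hTe | hTne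
    · refine ⟨q, hrep, fun α hα a ha => ?_⟩
      rcases hbound α hα a ha with rfl | h
      · exact absurd (hTe ▸ Finset.mem_filter.mpr ⟨hα, ha⟩ : α ∈ (∅ : Finset Ω))
          (Finset.notMem_empty α)
      · exact h
    obtain ⟨α0, hα0T⟩ := hTne
    have hTs : T ⊆ s := Finset.filter_subset _ s
    have hα0s : α0 ∈ s := hTs hα0T
    have hTlm : ∀ α ∈ T, IsLM r (q α * f α) M := by
      intro α hα
      obtain ⟨hαs, hMs⟩ := Finset.mem_filter.mp hα
      exact ⟨hMs, fun x hx hne => (hbound α hαs x hx).resolve_left hne⟩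
    have hTfact : ∀ α ∈ T, IsLM r (q α) (M - m α) ∧ m α ≤ M := by
      intro α hα
      have hprod := hTlm α hα
      have hq_ne : q α ≠ 0 := by
        rintro h
        rw [h, zero_mul] at hprod
        simpa using hprod.1
      obtain ⟨a, ha⟩ := exists_isLM hr hq_ne
      have heq : a + m α = M := isLM_unique hr (isLM_mul hr ha (hm α)) hprod
      have hle : m α ≤ M := by rw [← heq]; exact le_add_self
      have ha' : M - m α = a := by rw [← heq, add_tsub_cancel_right]
      exact ⟨by rw [ha']; exact ha, hle⟩
    set c : Ω → k := fun α => coeff (M - m α) (q α) with hcdef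
    set lc : Ω → k := fun α => coeff (m α) (f α) with hlcdef
    have hlc_ne : ∀ α, lc α ≠ 0 := fun α => isLM_coeff_ne_zero (hm α)
    have hcoeffM : ∀ α ∈ T, coeff M (q α * f α) = c α * lc α := by
      intro α hα
      have h1 := (hTfact α hα).1
      have h2 : (M - m α) + m α = M := tsub_add_cancel_of_le (hTfact α hα).2
      conv_lhs => rw [← h2]
      rw [coeff_mul_lm hr h1 (hm α)]
    have hsum0 : ∑ α ∈ T, c α * lc α = 0 := by
      have h2 : ∑ α ∈ T, c α * lc α = ∑ α ∈ T, coeff M (q α * f α) :=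
        Finset.sum_congr rfl (fun α hα => (hcoeffM α hα).symm)
      have h3 : ∑ α ∈ T, coeff M (q α * f α) = ∑ α ∈ s, coeff M (q α * f α) :=
        Finset.sum_subset hTs (fun x hx hxT =>
          notMem_support_iff.mp (fun hmem => hxT (Finset.mem_filter.mpr ⟨hx, hmem⟩)))
      rw [h2, h3, ← coeff_sum, ← hrep, hcM]
    set T' : Finset Ω := T.erase α0 with hT'def
    have hT'T : T' ⊆ T := Finset.erase_subset _ _
    have hmle : ∀ β ∈ T', m α0 ≤ M - m β := by
      intro β hβ
      have hβne : β ≠ α0 := Finset.ne_of_mem_erase hβ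
      rw [Finsupp.le_def]
      intro i
      rw [Finsupp.tsub_apply]
      have hb := Finsupp.le_def.mp (hTfact α0 hα0T).2 i
      rcases claimB hr hwo hreg β α0 hβne i with h | h
      · omega
      · omega
    set u : Ω → (ℕ →₀ ℕ) := fun β => M - m β - m α0 with hudef
    have hu1 : ∀ β ∈ T', u β + m α0 = M - m β := fun β hβ =>
      tsub_add_cancel_of_le (hmle β hβ)
    have hu2 : ∀ β ∈ T', (M - m β) + m β = M := fun β hβ =>
      tsub_add_cancel_of_le (hTfact β (hT'T hβ)).2
    set tail0 : MvPolynomial ℕ k := f α0 - monomial (m α0) (lc α0) with htail0def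
    have htail0 : ∀ t ∈ tail0.support, r t (m α0) := by
      intro t ht
      rw [mem_support_iff, htail0def, coeff_sub, coeff_monomial] at ht
      rcases eq_or_ne (m α0) t with h | h
      · exfalso
        apply ht
        rw [if_pos h, ← h]
        simp only [hlcdef]
        exact sub_self _
      · rw [if_neg h, sub_zero] at ht
        exact (hm α0).2 t (mem_support_iff.mpr ht) (fun e => h e.symm)
    set w : Ω → MvPolynomial ℕ k :=
      fun β => (c β * (lc α0)⁻¹) • (monomial (u β) (1 : k) * f β) with hwdef
    set q' : Ω → MvPolynomial ℕ k := fun α =>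
      if α = α0 then q α0 + ∑ β ∈ T', w β
      else if α ∈ T' then
        q α - monomial (M - m α) (c α) - (c α * (lc α0)⁻¹) • (monomial (u α) (1 : k) * tail0)
      else q α with hq'def
    have hq'α0 : q' α0 = q α0 + ∑ β ∈ T', w β := by
      simp [hq'def]
    have hq'T' : ∀ β ∈ T', q' β =
        q β - monomial (M - m β) (c β) - (c β * (lc α0)⁻¹) • (monomial (u β) (1 : k) * tail0) := by
      intro β hβ
      simp [hq'def, Finset.ne_of_mem_erase hβ, hβ]
    have hq'other : ∀ α, α ≠ α0 → α ∉ T' → q' α = q α := by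
      intro α h1 h2
      simp [hq'def, h1, h2]
    have hMeq : ∀ β ∈ T', (u β + m β) + m α0 = M := by
      intro β hβ
      rw [add_right_comm, hu1 β hβ, hu2 β hβ]
    have hkey_id : ∀ β ∈ T', q' β * f β + w β * f α0 = q β * f β := by
      intro β hβ
      have hmon : (monomial (u β) (1 : k)) * monomial (m α0) (lc α0) =
          monomial (M - m β) (lc α0) := by
        rw [monomial_mul, one_mul, hu1 β hβ]
      have hmon2 : (C (c β * (lc α0)⁻¹) : MvPolynomial ℕ k) * monomial (M - m β) (lc α0) =
          monomial (M - m β) (c β) := by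
        rw [C_mul_monomial, mul_assoc, inv_mul_cancel₀ (hlc_ne α0), mul_one]
      have hrwm : monomial (M - m β) (c β) =
          C (c β * (lc α0)⁻¹) * ((monomial (u β) (1 : k)) * monomial (m α0) (lc α0)) := by
        rw [hmon, hmon2]
      rw [hq'T' β hβ]
      simp only [hwdef, htail0def]
      rw [smul_eq_C_mul, smul_eq_C_mul, hrwm]
      ring
    have hrep' : g = ∑ α ∈ s, q' α * f α := by
      have hsub : T' ⊆ s.erase α0 := by
        intro x hx
        exact Finset.mem_erase.mpr ⟨Finset.ne_of_mem_erase hx, hTs (hT'T hx)⟩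
      have hq'eq : ∀ α ∈ (s.erase α0) \ T', q' α * f α = q α * f α := by
        intro α hα
        obtain ⟨hα1, hα2⟩ := Finset.mem_sdiff.mp hα
        rw [hq'other α (Finset.ne_of_mem_erase hα1) hα2]
      have hmain : ∑ α ∈ s, q' α * f α = ∑ α ∈ s, q α * f α := by
        rw [← Finset.add_sum_erase s (fun α => q' α * f α) hα0s,
          ← Finset.add_sum_erase s (fun α => q α * f α) hα0s,
          ← Finset.sum_sdiff hsub (f := fun α => q' α * f α),
          ← Finset.sum_sdiff hsub (f := fun α => q α * f α),
          Finset.sum_congr rfl hq'eq, hq'α0, add_mul, Finset.sum_mul]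
        have hT'sum : ∑ β ∈ T', q' β * f β + ∑ β ∈ T', w β * f α0 =
            ∑ β ∈ T', q β * f β := by
          rw [← Finset.sum_add_distrib]
          exact Finset.sum_congr rfl hkey_id
        rw [← hT'sum]
        ring
      rw [hmain]
      exact hrep
    refine ⟨q', hrep', ?_⟩
    intro α hαs a ha
    by_cases hαT' : α ∈ T'
    · have hβα0 : α ≠ α0 := Finset.ne_of_mem_erase hαT'
      rw [hq'T' α hαT', sub_mul] at ha
      rcases Finset.mem_union.mp (support_sub _ _ _ ha) with ha1 | ha2
      · obtain ⟨x, hx, y, hy, rfl⟩ := Finset.mem_add.mp (support_mul _ _ ha1)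
        have hx' : r x (M - m α) := by
          rw [mem_support_iff, coeff_sub, coeff_monomial] at hx
          rcases eq_or_ne (M - m α) x with h | h
          · exfalso
            apply hx
            rw [if_pos h, ← h]
            simp only [hcdef]
            exact sub_self _
          · rw [if_neg h, sub_zero] at hx
            exact (hTfact α (hT'T hαT')).1.2 x (mem_support_iff.mpr hx) (fun e => h e.symm)
        have hy' : y = m α ∨ r y (m α) := by
          rcases eq_or_ne y (m α) with h | h
          · exact Or.inl h
          · exact Or.inr ((hm α).2 y hy h)
        have h5 := radd_of_lt_le hr hx' hy'
        rw [hu2 α hαT'] at h5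
        exact h5
      · obtain ⟨x, hx, y, hy, rfl⟩ := Finset.mem_add.mp (support_mul _ _ ha2)
        have hx1 : x ∈ ((monomial (u α) (1 : k)) * tail0).support := support_smul hx
        obtain ⟨x1, hx1', t, ht, rfl⟩ := Finset.mem_add.mp (support_mul _ _ hx1)
        have hx1e : x1 = u α := by
          rw [support_monomial, if_neg one_ne_zero, Finset.mem_singleton] at hx1'
          exact hx1'
        subst hx1e
        have h1 : r (u α + t) (u α + m α0) := radd_left hr _ (htail0 t ht)
        rw [hu1 α hαT'] at h1
        have hy' : y = m α ∨ r y (m α) := by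
          rcases eq_or_ne y (m α) with h | h
          · exact Or.inl h
          · exact Or.inr ((hm α).2 y hy h)
        have h2 := radd_of_lt_le hr h1 hy'
        rw [hu2 α hαT'] at h2
        exact h2
    · by_cases hαα0 : α = α0
      · rw [hαα0] at ha
        have hsupp_le : ∀ b ∈ (q' α0 * f α0).support, b = M ∨ r b M := by
          intro b hb
          rw [hq'α0, add_mul, Finset.sum_mul] at hb
          rcases Finset.mem_union.mp (support_add hb) with hb1 | hb2
          · exact hbound α0 hα0s b hb1
          · obtain ⟨β, hβ, hbβ⟩ := Finset.mem_biUnion.mp (support_sum_subset _ _ hb2)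
            have hbβ' : b ∈ (((c β * (lc α0)⁻¹) • (monomial (u β) (1 : k) * f β)) * f α0).support := by
              simpa only [hwdef] using hbβ
            obtain ⟨x, hx, y, hy, rfl⟩ := Finset.mem_add.mp (support_mul _ _ hbβ')
            have hx1 : x ∈ ((monomial (u β) (1 : k)) * f β).support := support_smul hx
            obtain ⟨x1, hx1', z, hz, rfl⟩ := Finset.mem_add.mp (support_mul _ _ hx1)
            have hx1e : x1 = u β := by
              rw [support_monomial, if_neg one_ne_zero, Finset.mem_singleton] at hx1'
              exact hx1'
            subst hx1e
            have hz' : z = m β ∨ r z (m β) := by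
              rcases eq_or_ne z (m β) with h | h
              · exact Or.inl h
              · exact Or.inr ((hm β).2 z hz h)
            have hy' : y = m α0 ∨ r y (m α0) := by
              rcases eq_or_ne y (m α0) with h | h
              · exact Or.inl h
              · exact Or.inr ((hm α0).2 y hy h)
            have h5 := radd_le_le hr (radd_le_le hr (Or.inl (rfl : u β = u β)) hz') hy'
            rw [hMeq β hβ] at h5
            exact h5
        have hcoeffM0 : coeff M (q' α0 * f α0) = 0 := by
          rw [hq'α0, add_mul, Finset.sum_mul, coeff_add, coeff_sum]
          have h1 : ∀ β ∈ T', coeff M (w β * f α0) = c β * lc β := by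
            intro β hβ
            have hlm1 : IsLM r ((monomial (u β) (1 : k)) * f β) (u β + m β) :=
              isLM_mul hr (isLM_monomial one_ne_zero) (hm β)
            have h3 : coeff (u β + m β) ((monomial (u β) (1 : k)) * f β) = 1 * lc β := by
              rw [coeff_mul_lm hr (isLM_monomial one_ne_zero) (hm β), coeff_monomial,
                if_pos rfl]
            have h2 : coeff ((u β + m β) + m α0) (((monomial (u β) (1 : k)) * f β) * f α0) =
                (1 * lc β) * lc α0 := by
              rw [coeff_mul_lm hr hlm1 (hm α0), h3]
            have hwβ : w β * f α0 =
                (c β * (lc α0)⁻¹) • (((monomial (u β) (1 : k)) * f β) * f α0) := by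
              simp only [hwdef]
              rw [smul_mul_assoc]
            rw [hwβ, coeff_smul, ← hMeq β hβ, h2, smul_eq_mul]
            calc c β * (lc α0)⁻¹ * (1 * lc β * lc α0)
                = c β * lc β * ((lc α0)⁻¹ * lc α0) := by ring
              _ = c β * lc β := by rw [inv_mul_cancel₀ (hlc_ne α0), mul_one]
          rw [Finset.sum_congr rfl h1, hcoeffM α0 hα0T, Finset.add_sum_erase T
            (fun β => c β * lc β) hα0T, hsum0]
        rcases hsupp_le a ha with rfl | h
        · exact absurd hcoeffM0 (mem_support_iff.mp ha)
        · exact h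
      · rw [hq'other α hαα0 hαT'] at ha
        rcases hbound α hαs a ha with rfl | h
        · exact absurd (Finset.mem_erase.mpr ⟨hαα0, Finset.mem_filter.mpr ⟨hαs, ha⟩⟩) hαT'
        · exact h


lemma exists_rep {A : Set Ω} {g : MvPolynomial ℕ k} (hg : g ∈ Ideal.span (f '' A)) :
    ∃ (s : Finset Ω) (q : Ω → MvPolynomial ℕ k), ↑s ⊆ A ∧ g = ∑ α ∈ s, q α * f α := by
  classical
  obtain ⟨d, hdsupp, hdsum⟩ := Submodule.mem_span_set.mp hg
  have hch : ∀ p ∈ d.support, ∃ α, α ∈ A ∧ f α = p := by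
    intro p hp
    obtain ⟨α, hα, he⟩ := hdsupp hp
    exact ⟨α, hα, he⟩
  choose φ hφA hφf using hch
  have hinj : ∀ p ∈ d.support.attach, ∀ p' ∈ d.support.attach,
      φ p.1 p.2 = φ p'.1 p'.2 → p = p' := by
    intro p _ p' _ he
    have : p.1 = p'.1 := by rw [← hφf p.1 p.2, ← hφf p'.1 p'.2, he]
    exact Subtype.ext this
  refine ⟨d.support.attach.image (fun p => φ p.1 p.2), fun α => d (f α), ?_, ?_⟩
  · intro x hx
    rw [Finset.coe_image] at hx
    obtain ⟨p, _, rfl⟩ := hx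
    exact hφA p.1 p.2
  · calc g = ∑ p ∈ d.support, d p * p := by
          rw [← hdsum]
          rfl
    _ = ∑ p ∈ d.support.attach, d p.1 * p.1 := (Finset.sum_attach _ _).symm
    _ = ∑ p ∈ d.support.attach, d (f (φ p.1 p.2)) * f (φ p.1 p.2) := by
          refine Finset.sum_congr rfl (fun p _ => ?_)
          rw [hφf p.1 p.2]
    _ = ∑ α ∈ d.support.attach.image (fun p => φ p.1 p.2), d (f α) * f α :=
          (Finset.sum_image (f := fun α => d (f α) * f α) hinj).symm

lemma main_lm_mem {A : Set Ω} {g : MvPolynomial ℕ k} {Mg : ℕ →₀ ℕ}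
    (hg : g ∈ Ideal.span (f '' A)) (hMg : IsLM r g Mg) : ∃ α ∈ A, m α ≤ Mg := by
  classical
  obtain ⟨s, q, hsA, hrep⟩ := exists_rep hr hwo hreg hm hg
  have hgs : g.support ⊆ s.biUnion fun α => (q α * f α).support := by
    rw [hrep]; exact support_sum_subset s _
  obtain ⟨M, hMu, hmax⟩ :=
    exists_rmax hr (s.biUnion fun α => (q α * f α).support) ⟨Mg, hgs hMg.1⟩
  refine key hr hwo hreg hm M A g s q hsA hrep (fun α hα a ha => ?_) Mg hMg
  rcases eq_or_ne a M with h | h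
  · exact Or.inl h
  · exact Or.inr (hmax a (Finset.mem_biUnion.mpr ⟨α, hα, ha⟩) h)

lemma reg_mem (α : Ω) :
    ∀ M : ℕ →₀ ℕ, ∀ h : MvPolynomial ℕ k, (∀ a ∈ h.support, a = M ∨ r a M) →
      h * f α ∈ Ideal.span (f '' {β | lt β α}) → h ∈ Ideal.span (f '' {β | lt β α}) := by
  classical
  intro M
  refine (rwf hr).induction (C := fun M => ∀ h : MvPolynomial ℕ k,
      (∀ a ∈ h.support, a = M ∨ r a M) →
      h * f α ∈ Ideal.span (f '' {β | lt β α}) →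
      h ∈ Ideal.span (f '' {β | lt β α})) M ?_
  clear M
  intro M IH h hb hmem
  by_cases hh : h = 0
  · rw [hh]; exact Ideal.zero_mem _
  obtain ⟨Mh, hMh⟩ := exists_isLM hr hh
  have hMhM : Mh = M ∨ r Mh M := hb Mh hMh.1
  have hprod : IsLM r (h * f α) (Mh + m α) := isLM_mul hr hMh (hm α)
  obtain ⟨β, hβ, hble⟩ := main_lm_mem hr hwo hreg hm hmem hprod
  have hβα : β ≠ α := by
    haveI := hwo
    rintro rfl
    exact irrefl_of lt β hβ
  have hble' : m β ≤ Mh := coprime_cancel hr hwo hreg hβα hble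
  have hlcβ : coeff (m β) (f β) ≠ 0 := isLM_coeff_ne_zero (hm β)
  set p : MvPolynomial ℕ k := monomial (Mh - m β) (1 : k) * f β with hpdef
  have hpeq : (Mh - m β) + m β = Mh := tsub_add_cancel_of_le hble'
  have hpcoeff : coeff Mh p = coeff (m β) (f β) := by
    have h0 : coeff ((Mh - m β) + m β) (monomial (Mh - m β) (1 : k) * f β) =
        1 * coeff (m β) (f β) := by
      rw [coeff_mul_lm hr (isLM_monomial one_ne_zero) (hm β), coeff_monomial, if_pos rfl]
    rw [hpeq] at h0
    rw [hpdef, h0, one_mul]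
  set h1 : MvPolynomial ℕ k := h - (coeff Mh h * (coeff (m β) (f β))⁻¹) • p with h1def
  have hfβJ : f β ∈ Ideal.span (f '' {γ | lt γ α}) := Ideal.subset_span ⟨β, hβ, rfl⟩
  have hsJ : ((coeff Mh h * (coeff (m β) (f β))⁻¹) • p) ∈ Ideal.span (f '' {γ | lt γ α}) := by
    rw [hpdef, smul_eq_C_mul, ← mul_assoc]
    exact Ideal.mul_mem_left _ _ hfβJ
  have h1mem : h1 * f α ∈ Ideal.span (f '' {γ | lt γ α}) := by
    rw [h1def, sub_mul]
    exact Submodule.sub_mem _ hmem (Ideal.mul_mem_right _ _ hsJ)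
  have hcoeffMh : coeff Mh h1 = 0 := by
    rw [h1def, coeff_sub, coeff_smul, hpcoeff, smul_eq_mul, mul_assoc,
      inv_mul_cancel₀ hlcβ, mul_one, sub_self]
  have hb1 : ∀ a ∈ h1.support, r a Mh := by
    intro a ha
    have hane : a ≠ Mh := by
      rintro rfl
      exact (mem_support_iff.mp ha) hcoeffMh
    rw [h1def] at ha
    rcases Finset.mem_union.mp (support_sub _ _ _ ha) with h2 | h2
    · exact hMh.2 a h2 hane
    · have h3 : a ∈ p.support := support_smul h2
      rw [hpdef] at h3
      rcases support_mul_le hr (isLM_monomial one_ne_zero) (hm β) a h3 with h4 | h4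
      · rw [hpeq] at h4; exact absurd h4 hane
      · rw [hpeq] at h4; exact h4
  by_cases h10 : h1 = 0
  · have hhe : h = (coeff Mh h * (coeff (m β) (f β))⁻¹) • p := by
      have h5 : h - (coeff Mh h * (coeff (m β) (f β))⁻¹) • p = 0 := by rw [← h1def]; exact h10
      rwa [sub_eq_zero] at h5
    rw [hhe]
    exact hsJ
  · obtain ⟨M1, hM1, hmax1⟩ := exists_rmax hr h1.support
      (Finset.nonempty_iff_ne_empty.mpr (fun he => h10 (support_eq_empty.mp he)))
    have hrM1 : r M1 M := by
      have h4 : r M1 Mh := hb1 M1 hM1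
      rcases hMhM with rfl | h5
      · exact h4
      · exact rtrans hr h4 h5
    have h1J := IH M1 hrM1 h1 (fun a ha => by
      rcases eq_or_ne a M1 with h' | h'
      · exact Or.inl h'
      · exact Or.inr (hmax1 a ha h')) h1mem
    have hhe : h = h1 + (coeff Mh h * (coeff (m β) (f β))⁻¹) • p := by
      rw [h1def]; ring
    rw [hhe]
    exact Submodule.add_mem _ h1J hsJ

end Key

end BSAux

/-- Proposition 1.25 (generalized Bayer–Stillman criterion): if the leading monomials of
a family `(f_α)` of nonzero polynomials form a regular sequence on `S`, then `(f_α)` is a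
regular sequence on `S` and `{f_α}` is a Gröbner base for the ideal it generates. -/
theorem bayer_stillman {k : Type*} [Field k]
    (r : (ℕ →₀ ℕ) → (ℕ →₀ ℕ) → Prop) (hr : IsMonomialOrder r)
    {Ω : Type*} (lt : Ω → Ω → Prop) (hwo : IsWellOrder Ω lt)
    (f : Ω → MvPolynomial ℕ k) (hf : ∀ α, f α ≠ 0)
    (m : Ω → (ℕ →₀ ℕ)) (hm : ∀ α, IsLM r (f α) (m α))
    (hreg : IsRegularSeq lt (fun α => (monomial (m α) 1 : MvPolynomial ℕ k))) :
    IsRegularSeq lt f ∧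
      IsGroebnerBasis r (Set.range f) (Ideal.span (Set.range f)) := by
  classical
  have htop : Ideal.span (Set.range f) ≠ ⊤ := by
    intro htop
    have h1 : (1 : MvPolynomial ℕ k) ∈ Ideal.span (f '' Set.univ) := by
      rw [Set.image_univ, htop]; exact Submodule.mem_top
    have hlm1 : IsLM r (1 : MvPolynomial ℕ k) 0 := by
      have hs : (1 : MvPolynomial ℕ k) = monomial 0 1 := by rw [monomial_zero', C_1]
      rw [hs]; exact BSAux.isLM_monomial one_ne_zero
    obtain ⟨α, -, hle⟩ := BSAux.main_lm_mem hr hwo hreg hm h1 hlm1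
    exact BSAux.claim0 hr hwo hreg α
      (Finsupp.ext fun i => Nat.le_zero.mp (Finsupp.le_def.mp hle i))
  refine ⟨⟨htop, ?_⟩, ?_, ?_⟩
  · intro α h hmem
    by_cases hh : h = 0
    · rw [hh]; exact Ideal.zero_mem _
    obtain ⟨M, hM, hmax⟩ := BSAux.exists_rmax hr h.support
      (Finset.nonempty_iff_ne_empty.mpr (fun he => hh (support_eq_empty.mp he)))
    refine BSAux.reg_mem hr hwo hreg hm α M h (fun a ha => ?_) hmem
    rcases eq_or_ne a M with h' | h'
    · exact Or.inl h'
    · exact Or.inr (hmax a ha h')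
  · exact fun x hx => Ideal.subset_span hx
  · apply le_antisymm
    · rw [Ideal.span_le]
      rintro t ⟨m', ⟨g, hgrange, hg0, hglm⟩, rfl⟩
      obtain ⟨α, rfl⟩ := hgrange
      have hm' : m' = m α := BSAux.isLM_unique hr hglm (hm α)
      subst hm'
      have hltmem : monomial (m α) (coeff (m α) (f α)) ∈
          initialIdeal r (Ideal.span (Set.range f)) := by
        apply Ideal.subset_span
        exact ⟨f α, Ideal.subset_span (Set.mem_range_self α), hf α, ⟨m α, hm α, rfl⟩⟩
      have hre : (monomial (m α) (1 : k) : MvPolynomial ℕ k) =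
          C (coeff (m α) (f α))⁻¹ * monomial (m α) (coeff (m α) (f α)) := by
        rw [C_mul_monomial, inv_mul_cancel₀ (BSAux.isLM_coeff_ne_zero (hm α))]
      rw [SetLike.mem_coe, hre]
      exact Ideal.mul_mem_left _ _ hltmem
    · rw [initialIdeal, Ideal.span_le]
      rintro t ⟨g, hgI, hg0, ⟨Mg, hgMg, rfl⟩⟩
      have hgI' : g ∈ Ideal.span (f '' Set.univ) := by rwa [Set.image_univ]
      obtain ⟨α, -, hle⟩ := BSAux.main_lm_mem hr hwo hreg hm hgI' hgMg
      have hdecomp : (monomial Mg (g.coeff Mg) : MvPolynomial ℕ k) =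
          monomial (m α) 1 * monomial (Mg - m α) (g.coeff Mg) := by
        rw [monomial_mul, one_mul, add_tsub_cancel_of_le hle]
      rw [SetLike.mem_coe, hdecomp]
      apply Ideal.mul_mem_right
      apply Ideal.subset_span
      exact ⟨m α, ⟨f α, Set.mem_range_self α, hf α, hm α⟩, rfl⟩

end
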